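/- Let R be a commutative ring and H = R^• its monoid of regular elements. Then the set of regular elements of the complete integral closure of R equals the complete integral closure of the monoid H: (R̂)^• = Ĥ. Consequently, if R is completely integrally closed then so is H; and if R is additionally a v-Marot ring, then R is completely integrally closed if and only if H is. -/

import Mathlib

open scoped Pointwise

/-- For subsets `Z, X` of the total quotient ring `T`, the colon set
`(Z : X) = {a ∈ T | a X ⊆ Z}`. -/
def colonSet (T : Type*) [CommRing T] (Z X : Set T) : Set T :=
  {a : T | ∀ x ∈ X, a * x ∈ Z}

/-- The image of `R` inside its total quotient ring `T`. -/
def ringSet (R T : Type*) [CommRing R] [CommRing T] [Algebra R T] : Set T :=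
  Set.range (algebraMap R T)

/-- `X⁻¹ = (R : X)` for a subset `X ⊆ T`. -/
def invSet (R T : Type*) [CommRing R] [CommRing T] [Algebra R T] (X : Set T) : Set T :=
  colonSet T (ringSet R T) X

/-- The divisorial (v-) closure `X_v = (X⁻¹)⁻¹` of a subset `X ⊆ T`. -/
def vSet (R T : Type*) [CommRing R] [CommRing T] [Algebra R T] (X : Set T) : Set T :=
  invSet R T (invSet R T X)

/-- The set of regular elements (non-zero-divisors) of `T`. -/
def regSet (T : Type*) [CommRing T] : Set T :=
  {t : T | t ∈ nonZeroDivisors T}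

/-- The colon set computed inside `Q = T^• ` : `(Z :_Q X) = {a ∈ Q | a X ⊆ Z}`. -/
def colonQ (T : Type*) [CommRing T] (Z X : Set T) : Set T :=
  {a : T | a ∈ nonZeroDivisors T ∧ ∀ x ∈ X, a * x ∈ Z}

/-- The monoid `H = R^•` of regular elements of `R`, viewed inside `T`. -/
def HSet (R T : Type*) [CommRing R] [CommRing T] [Algebra R T] : Set T :=
  ringSet R T ∩ regSet T

/-- The v-closure of a subset of `Q = T^•` with respect to the monoid `H = R^•`. -/
def vMon (R T : Type*) [CommRing R] [CommRing T] [Algebra R T] (X : Set T) : Set T :=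
  colonQ T (HSet R T) (colonQ T (HSet R T) X)

/-- `X ⊆ T` is `R`-fractional: `cX ⊆ R` for some regular `c ∈ R^•`. -/
def isFrac (R T : Type*) [CommRing R] [CommRing T] [Algebra R T] (X : Set T) : Prop :=
  ∃ c : R, c ∈ nonZeroDivisors R ∧ ∀ x ∈ X, algebraMap R T c * x ∈ ringSet R T

/-- The complete integral closure `R̂` of `R` in `T`. -/
def hatSet (R T : Type*) [CommRing R] [CommRing T] [Algebra R T] : Set T :=
  {x : T | ∃ c : R, c ∈ nonZeroDivisors R ∧
    ∀ n : ℕ, 1 ≤ n → algebraMap R T c * x ^ n ∈ ringSet R T}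

/-- The complete integral closure `Ĥ` of the monoid `H = R^•` in `q(H) = T^•`. -/
def monHat (R T : Type*) [CommRing R] [CommRing T] [Algebra R T] : Set T :=
  {x : T | x ∈ nonZeroDivisors T ∧
    ∃ c ∈ HSet R T, ∀ n : ℕ, 1 ≤ n → c * x ^ n ∈ HSet R T}

/-- `R` is a v-Marot ring: every regular fractional divisorial ideal is
v-generated by its regular elements. -/
def isVMarot (R T : Type*) [CommRing R] [CommRing T] [Algebra R T] : Prop :=
  ∀ I : Set T, (I ∩ regSet T).Nonempty → isFrac R T I → vSet R T I = I →
    I = vSet R T (I ∩ regSet T)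

section Aux

variable (R T : Type*) [CommRing R] [CommRing T] [Algebra R T]

lemma ringSet_one_mem : (1 : T) ∈ ringSet R T := ⟨1, map_one _⟩

lemma ringSet_mul_mem {a b : T} (ha : a ∈ ringSet R T) (hb : b ∈ ringSet R T) :
    a * b ∈ ringSet R T := by
  obtain ⟨r, rfl⟩ := ha; obtain ⟨s, rfl⟩ := hb
  exact ⟨r * s, (map_mul _ _ _)⟩

lemma subset_vSet (X : Set T) : X ⊆ vSet R T X := by
  intro x hx w hw
  rw [mul_comm]
  exact hw x hx

lemma invSet_vSet (X : Set T) : invSet R T (vSet R T X) = invSet R T X := by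
  apply Set.Subset.antisymm
  · intro a ha x hx
    exact ha x (subset_vSet R T X hx)
  · intro a ha t ht
    rw [mul_comm]
    exact ht a ha

lemma vSet_idem (X : Set T) : vSet R T (vSet R T X) = vSet R T X := by
  show invSet R T (invSet R T (vSet R T X)) = vSet R T X
  rw [invSet_vSet]
  rfl

lemma vSet_mono {X Y : Set T} (h : X ⊆ Y) : vSet R T X ⊆ vSet R T Y := by
  intro a ha w hw
  exact ha w (fun x hx => hw x (h hx))

lemma invSet_ringSet : invSet R T (ringSet R T) = ringSet R T := by
  apply Set.Subset.antisymm
  · intro a ha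
    have := ha 1 (ringSet_one_mem R T)
    rwa [mul_one] at this
  · intro a ha x hx
    exact ringSet_mul_mem R T ha hx

lemma vSet_ringSet : vSet R T (ringSet R T) = ringSet R T := by
  show invSet R T (invSet R T (ringSet R T)) = ringSet R T
  rw [invSet_ringSet, invSet_ringSet]

lemma mul_mem_vSet {X : Set T} (hX : ∀ a ∈ X, ∀ b ∈ X, a * b ∈ X)
    {u v : T} (hu : u ∈ vSet R T X) (hv : v ∈ vSet R T X) : u * v ∈ vSet R T X := by
  intro w hw
  have huw : u * w ∈ invSet R T X := by
    intro x hx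
    have hwx : w * x ∈ invSet R T X := by
      intro y hy
      rw [mul_assoc]
      exact hw _ (hX x hx y hy)
    have := hu _ hwx
    rw [show u * (w * x) = u * w * x by ring] at this
    exact this
  have := hv _ huw
  rw [show v * (u * w) = u * v * w by ring] at this
  exact this

lemma pow_mem_vSet {X : Set T} (hX : ∀ a ∈ X, ∀ b ∈ X, a * b ∈ X)
    {t : T} (ht : t ∈ vSet R T X) : ∀ n : ℕ, 1 ≤ n → t ^ n ∈ vSet R T X := by
  intro n hn
  induction n with
  | zero => omega
  | succ m ih =>
    rcases Nat.eq_or_lt_of_le hn with h | h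
    · rw [← h, pow_one]; exact ht
    · have hm : 1 ≤ m := by omega
      rw [pow_succ]
      exact mul_mem_vSet R T hX (ih hm) ht

end Aux
theorem stmt15 (R T : Type*) [CommRing R] [CommRing T] [Algebra R T] [IsFractionRing R T] :
    hatSet R T ∩ regSet T = monHat R T ∧
      (hatSet R T = ringSet R T → monHat R T = HSet R T) ∧
      (isVMarot R T → (hatSet R T = ringSet R T ↔ monHat R T = HSet R T)) := by
  have hinj : Function.Injective (algebraMap R T) := IsFractionRing.injective R T
  have hmapreg : ∀ c : R, c ∈ nonZeroDivisors R → algebraMap R T c ∈ nonZeroDivisors T :=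
    fun c hc => (IsLocalization.map_units T ⟨c, hc⟩).mem_nonZeroDivisors
  have hregmap : ∀ a : R, algebraMap R T a ∈ nonZeroDivisors T → a ∈ nonZeroDivisors R := by
    intro a ha
    rw [mem_nonZeroDivisors_iff_right] at ha ⊢
    intro b hb
    have h0 : algebraMap R T b * algebraMap R T a = 0 := by
      rw [← map_mul, hb, map_zero]
    have := ha _ h0
    apply hinj
    rw [this, map_zero]
  have h1 : hatSet R T ∩ regSet T = monHat R T := by
    apply Set.Subset.antisymm
    · rintro x ⟨⟨c, hc, hcx⟩, hxreg⟩
      refine ⟨hxreg, algebraMap R T c, ⟨⟨c, rfl⟩, hmapreg c hc⟩, ?_⟩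
      intro n hn
      exact ⟨hcx n hn, mul_mem (hmapreg c hc) (pow_mem hxreg n)⟩
    · rintro x ⟨hxreg, c, ⟨⟨a, rfl⟩, hcreg⟩, hcn⟩
      exact ⟨⟨a, hregmap a hcreg, fun n hn => (hcn n hn).1⟩, hxreg⟩
  have h2 : hatSet R T = ringSet R T → monHat R T = HSet R T := by
    intro he
    rw [← h1, he]
    rfl
  refine ⟨h1, h2, fun hVM => ⟨h2, ?_⟩⟩
  intro hMon
  have hringsubhat : ringSet R T ⊆ hatSet R T := by
    rintro x ⟨r, rfl⟩
    exact ⟨1, one_mem _, fun n hn => ⟨r ^ n, by rw [map_one, one_mul, map_pow]⟩⟩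
  apply Set.Subset.antisymm _ hringsubhat
  rintro x ⟨c, hc, hcx⟩
  set S : Set T := {t : T | ∃ r : R, ∃ n : ℕ, t = algebraMap R T r * x ^ n} with hS
  have hSmul : ∀ a ∈ S, ∀ b ∈ S, a * b ∈ S := by
    rintro a ⟨r, m, rfl⟩ b ⟨s, n, rfl⟩
    exact ⟨r * s, m + n, by rw [map_mul, pow_add]; ring⟩
  have hc_inv : algebraMap R T c ∈ invSet R T S := by
    rintro t ⟨r, n, rfl⟩
    rcases Nat.eq_zero_or_pos n with h0 | hpos
    · subst h0
      exact ⟨c * r, by rw [map_mul]; simp⟩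
    · obtain ⟨d, hd⟩ := hcx n hpos
      exact ⟨r * d, by rw [map_mul, hd]; ring⟩
  have hx_mem_S : x ∈ S := ⟨1, 1, by rw [map_one, one_mul, pow_one]⟩
  have h1S : (1 : T) ∈ S := ⟨1, 0, by simp⟩
  have hEq : vSet R T S = vSet R T (vSet R T S ∩ regSet T) :=
    hVM (vSet R T S) ⟨1, subset_vSet R T S h1S, (one_mem (nonZeroDivisors T) : (1:T) ∈ nonZeroDivisors T)⟩
      ⟨c, hc, fun t ht => by rw [mul_comm]; exact ht _ hc_inv⟩ (vSet_idem R T S)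
  have hIreg : vSet R T S ∩ regSet T ⊆ ringSet R T := by
    rintro t ⟨htI, htreg⟩
    have htmon : t ∈ monHat R T := by
      refine ⟨htreg, algebraMap R T c, ⟨⟨c, rfl⟩, hmapreg c hc⟩, fun n hn => ?_⟩
      constructor
      · rw [mul_comm]
        exact (pow_mem_vSet R T hSmul htI n hn) _ hc_inv
      · exact mul_mem (hmapreg c hc) (pow_mem htreg n)
    rw [hMon] at htmon
    exact htmon.1
  have hIsub : vSet R T S ⊆ ringSet R T := by
    rw [hEq]
    intro t ht
    rw [← vSet_ringSet R T]
    exact vSet_mono R T hIreg ht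
  exact hIsub (subset_vSet R T S hx_mem_S)
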